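/- A coherent betting function R is B-consistent if and only if there exists a basic belief assignment m such that Buy_R(X) = Σ_{S⊆Ω, S≠∅} m(S)·min_{ω∈S} X(ω) for every bet X. -/

import Mathlib

open scoped Classical

variable {Ω : Type*}

/-- A betting function: for each bet `X` there is a threshold `α₀` such that the
agent rejects `X + α` for `α < α₀` and accepts it for `α ≥ α₀`. -/
def IsBettingFunction (R : (Ω → ℝ) → Bool) : Prop :=
  ∀ X : Ω → ℝ, ∃ α₀ : ℝ,
    (∀ α : ℝ, α < α₀ → R (fun ω => X ω + α) = false) ∧
    (∀ α : ℝ, α₀ ≤ α → R (fun ω => X ω + α) = true)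

/-- The buy function: maximum price the agent pays for `X`. -/
noncomputable def Buy (R : (Ω → ℝ) → Bool) (X : Ω → ℝ) : ℝ :=
  sSup {α : ℝ | R (fun ω => X ω - α) = true}

/-- The sell function: minimum price at which the agent sells `X`. -/
noncomputable def Sell (R : (Ω → ℝ) → Bool) (X : Ω → ℝ) : ℝ :=
  sInf {α : ℝ | R (fun ω => α - X ω) = true}

/-- Coherence of a betting function. -/
def Coherent (R : (Ω → ℝ) → Bool) : Prop :=
  (∀ X : Ω → ℝ, (∀ ω, 0 < X ω) → R X = true) ∧
  (∀ (X : Ω → ℝ) (c : ℝ), 0 < c → R (fun ω => c * X ω) = R X) ∧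
  (∀ X Y : Ω → ℝ, R X = true → R Y = true → R (fun ω => X ω + Y ω) = true)

/-- Indicator bet of a set. -/
noncomputable def ind (A : Set Ω) : Ω → ℝ := A.indicator fun _ => 1

/-- A belief valuation. -/
def BeliefValuation (B : Set Ω → Bool) : Prop :=
  (∀ A : Set Ω, B A = true → B Aᶜ = false) ∧
  (∀ A C : Set Ω, B A = true → A ⊆ C → B C = true) ∧
  (∀ A C : Set Ω, B A = true → B C = true → B (A ∩ C) = true) ∧
  B Set.univ = true

/-- Guaranteed revenue of a bet under a belief valuation. -/
noncomputable def GB (B : Set Ω → Bool) (X : Ω → ℝ) : ℝ :=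
  sSup ((fun A => sInf (X '' A)) '' {A | B A = true})

/-- P-consistency: compare guaranteed revenues of combined bets. -/
def PConsistent (R : (Ω → ℝ) → Bool) : Prop :=
  ∀ (N M : ℕ) (X : Fin N → Ω → ℝ) (Y : Fin M → Ω → ℝ),
    (∀ E : Set Ω, E.Nonempty →
      sInf ((fun ω => ∑ i, X i ω) '' E) ≤ sInf ((fun ω => ∑ j, Y j ω) '' E)) →
    ∑ i, Buy R (X i) ≤ ∑ j, Buy R (Y j)

/-- B-consistency: compare sums of guaranteed revenues of individual bets. -/
def BConsistent (R : (Ω → ℝ) → Bool) : Prop :=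
  ∀ (N M : ℕ) (X : Fin N → Ω → ℝ) (Y : Fin M → Ω → ℝ),
    (∀ E : Set Ω, E.Nonempty →
      ∑ i, sInf (X i '' E) ≤ ∑ j, sInf (Y j '' E)) →
    ∑ i, Buy R (X i) ≤ ∑ j, Buy R (Y j)

/-- A (finitely additive) probability distribution with values in `[0,1]`. -/
def IsProbDist (P : Set Ω → ℝ) : Prop :=
  (∀ A : Set Ω, 0 ≤ P A ∧ P A ≤ 1) ∧ P ∅ = 0 ∧ P Set.univ = 1 ∧
  ∀ A C : Set Ω, P (A ∪ C) = P A + P C - P (A ∩ C)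

/-- A basic belief assignment. -/
def IsBBA [Fintype Ω] (m : Finset Ω → ℝ) : Prop :=
  (∀ S : Finset Ω, 0 ≤ m S ∧ m S ≤ 1) ∧ m ∅ = 0 ∧ ∑ S : Finset Ω, m S = 1

/-- Choquet integral of `X` with respect to the bba `m`. -/
noncomputable def Choquet [Fintype Ω] (m : Finset Ω → ℝ) (X : Ω → ℝ) : ℝ :=
  ∑ S : Finset Ω, m S * sInf (X '' (S : Set Ω))

/-- The belief function induced by a bba. -/
noncomputable def BelOf [Fintype Ω] (m : Finset Ω → ℝ) (A : Set Ω) : ℝ :=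
  ∑ S ∈ Finset.univ.filter (fun S : Finset Ω => (S : Set Ω) ⊆ A), m S

/-- Complete monotonicity (condition (B2)). -/
def CompletelyMonotone (Bel : Set Ω → ℝ) : Prop :=
  ∀ (N : ℕ) (A : Fin N → Set Ω),
    ∑ I ∈ (Finset.univ : Finset (Finset (Fin N))).filter (fun I => I ≠ ∅),
      (-1 : ℝ) ^ (I.card + 1) * Bel (⋂ i ∈ I, A i) ≤ Bel (⋃ i, A i)

/-- Shafer belief function. -/
def IsBeliefFunction (Bel : Set Ω → ℝ) : Prop :=
  (∀ A : Set Ω, 0 ≤ Bel A ∧ Bel A ≤ 1) ∧ Bel ∅ = 0 ∧ Bel Set.univ = 1 ∧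
  CompletelyMonotone Bel


/-! ### Auxiliary lemmas -/

section BuyLemmas
variable {R : (Ω → ℝ) → Bool}

lemma buy_spec (hR : IsBettingFunction R) (X : Ω → ℝ) (α : ℝ) :
    R (fun ω => X ω - α) = true ↔ α ≤ Buy R X := by
  obtain ⟨α₀, h1, h2⟩ := hR X
  have hset : {β : ℝ | R (fun ω => X ω - β) = true} = Set.Iic (-α₀) := by
    ext β
    simp only [Set.mem_setOf_eq, Set.mem_Iic]
    constructor
    · intro h
      by_contra hβ
      push_neg at hβ
      have : -β < α₀ := by linarith
      have := h1 (-β) this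
      simp only [← sub_eq_add_neg] at this
      rw [h] at this
      exact absurd this (by simp)
    · intro h
      have : α₀ ≤ -β := by linarith
      have := h2 (-β) this
      simpa only [← sub_eq_add_neg] using this
  have hbuy : Buy R X = -α₀ := by
    rw [Buy, hset, csSup_Iic]
  rw [hbuy]
  constructor
  · intro h
    have : α ∈ {β : ℝ | R (fun ω => X ω - β) = true} := h
    rw [hset] at this; exact this
  · intro h
    have : α ∈ Set.Iic (-α₀) := h
    rw [← hset] at this; exact this

lemma R_const_iff (hR : IsBettingFunction R) (hC : Coherent R) (c : ℝ) :
    R (fun _ => c) = true ↔ 0 ≤ c := by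
  obtain ⟨α₀, h1, h2⟩ := hR (fun _ => (0 : ℝ))
  have key : ∀ d : ℝ, (fun _ : Ω => d) = (fun ω : Ω => (fun _ : Ω => (0:ℝ)) ω + d) := by
    intro d; funext ω; simp
  have hle : α₀ ≤ 0 := by
    by_contra h
    push_neg at h
    have hf := h1 (α₀ / 2) (by linarith)
    have ht : R (fun ω : Ω => (fun _ : Ω => (0:ℝ)) ω + α₀ / 2) = true := by
      apply hC.1; intro ω; simpa using by linarith
    rw [hf] at ht; exact absurd ht (by simp)
  have hge : 0 ≤ α₀ := by
    by_contra h
    push_neg at h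
    have ht := h2 α₀ le_rfl
    have h2a : R (fun ω : Ω => 2 * ((fun _ : Ω => (0:ℝ)) ω + α₀)) = true := by
      rw [hC.2.1 _ 2 (by norm_num)]; exact ht
    have heq : (fun ω : Ω => 2 * ((fun _ : Ω => (0:ℝ)) ω + α₀)) =
        (fun ω : Ω => (fun _ : Ω => (0:ℝ)) ω + 2 * α₀) := by
      funext ω; ring
    rw [heq] at h2a
    have hf := h1 (2 * α₀) (by linarith)
    rw [hf] at h2a; exact absurd h2a (by simp)
  have hα : α₀ = 0 := le_antisymm hle hge
  constructor
  · intro h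
    by_contra hc
    push_neg at hc
    have := h1 c (by rw [hα]; exact hc)
    rw [← key] at this
    rw [h] at this; exact absurd this (by simp)
  · intro h
    have := h2 c (by rw [hα]; exact h)
    rwa [← key] at this

lemma buy_const (hR : IsBettingFunction R) (hC : Coherent R) (c : ℝ) :
    Buy R (fun _ => c) = c := by
  have h : ∀ α : ℝ, (α ≤ Buy R (fun _ : Ω => c) ↔ α ≤ c) := by
    intro α
    rw [← buy_spec hR]
    have : (fun ω : Ω => (fun _ : Ω => c) ω - α) = (fun _ : Ω => c - α) := rfl
    rw [this, R_const_iff hR hC]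
    constructor <;> intro <;> linarith
  exact le_antisymm ((h _).mp le_rfl) ((h c).mpr le_rfl)

lemma buy_smul (hR : IsBettingFunction R) (hC : Coherent R) (X : Ω → ℝ) {c : ℝ} (hc : 0 ≤ c) :
    Buy R (fun ω => c * X ω) = c * Buy R X := by
  rcases eq_or_lt_of_le hc with h | h
  · have : (fun ω => c * X ω) = (fun _ : Ω => (0:ℝ)) := by
      funext ω; rw [← h]; ring
    rw [this, buy_const hR hC, ← h]; ring
  · have key : ∀ α : ℝ, (α ≤ Buy R (fun ω => c * X ω) ↔ α ≤ c * Buy R X) := by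
      intro α
      rw [← buy_spec hR]
      have heq : (fun ω => (fun ω => c * X ω) ω - α) = (fun ω => c * (X ω - α / c)) := by
        funext ω; field_simp
      rw [heq, hC.2.1 _ c h, buy_spec hR]
      rw [div_le_iff₀ h]
      constructor <;> intro <;> nlinarith [h]
    exact le_antisymm ((key _).mp le_rfl) ((key _).mpr le_rfl)

end BuyLemmas

section MinLemmas
variable [Fintype Ω]

lemma min_le_of_mem {E : Set Ω} (X : Ω → ℝ) {ω : Ω} (hω : ω ∈ E) :
    sInf (X '' E) ≤ X ω :=
  csInf_le (Set.Finite.bddBelow (E.toFinite.image X)) (Set.mem_image_of_mem _ hω)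

omit [Fintype Ω] in
lemma min_const {E : Set Ω} (hE : E.Nonempty) (c : ℝ) :
    sInf ((fun _ => c) '' E) = c := by
  rw [Set.Nonempty.image_const hE, csInf_singleton]

omit [Fintype Ω] in
lemma ind_apply (A : Set Ω) (ω : Ω) : ind A ω = if ω ∈ A then 1 else 0 := by
  simp [ind, Set.indicator_apply]

lemma min_scaled_ind {E : Set Ω} (hE : E.Nonempty) {c : ℝ} (hc : 0 ≤ c) (A : Set Ω) :
    sInf ((fun ω => c * ind A ω) '' E) = if E ⊆ A then c else 0 := by
  split_ifs with h
  · have himg : (fun ω => c * ind A ω) '' E = {c} := by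
      apply Set.Subset.antisymm
      · rintro y ⟨ω, hω, rfl⟩
        simp [ind_apply, h hω]
      · rintro y rfl
        obtain ⟨ω, hω⟩ := hE
        exact ⟨ω, hω, by simp [ind_apply, h hω]⟩
    rw [himg, csInf_singleton]
  · obtain ⟨ω₀, hω₀E, hω₀A⟩ := Set.not_subset.mp h
    apply IsLeast.csInf_eq
    constructor
    · exact ⟨ω₀, hω₀E, by simp [ind_apply, hω₀A]⟩
    · rintro y ⟨ω, hω, rfl⟩
      simp only [ind_apply]
      split_ifs <;> simp [hc]

lemma min_ind_bet {E : Set Ω} (hE : E.Nonempty) (A : Set Ω) :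
    sInf (ind A '' E) = if E ⊆ A then 1 else 0 := by
  have h1 : ind A = fun ω => (1:ℝ) * ind A ω := by funext ω; ring
  rw [h1, min_scaled_ind hE zero_le_one]

end MinLemmas

section Combinatorics
lemma sum_pow_neg_one (V : Finset Ω) :
    ∑ U ∈ V.powerset, (-1:ℝ)^U.card = if V = ∅ then 1 else 0 := by
  have := Finset.sum_powerset_neg_one_pow_card (x := V)
  have h2 : ((∑ U ∈ V.powerset, (-1:ℤ)^U.card : ℤ) : ℝ)
      = ∑ U ∈ V.powerset, (-1:ℝ)^U.card := by push_cast; ring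
  rw [← h2, this]
  split_ifs <;> simp

lemma sum_sdiff_pow_neg_one (V : Finset Ω) :
    ∑ U ∈ V.powerset, (-1:ℝ)^((V \ U).card) = if V = ∅ then 1 else 0 := by
  rw [← sum_pow_neg_one]
  apply Finset.sum_nbij' (fun U => V \ U) (fun U => V \ U)
  · intro a ha; simp [Finset.mem_powerset]
  · intro a ha; simp [Finset.mem_powerset]
  · intro a ha; exact sdiff_sdiff_eq_self (Finset.mem_powerset.mp ha)
  · intro a ha; exact sdiff_sdiff_eq_self (Finset.mem_powerset.mp ha)
  · intro a ha; rfl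

lemma core1 (S F : Finset Ω) :
    ∑ T ∈ S.powerset, (-1:ℝ)^((S \ T).card) * (if F ⊆ T then 1 else 0)
      = if F = S then 1 else 0 := by
  by_cases hFS : F ⊆ S
  · have : ∑ T ∈ S.powerset, (-1:ℝ)^((S \ T).card) * (if F ⊆ T then 1 else 0)
        = ∑ T ∈ S.powerset.filter (fun T => F ⊆ T), (-1:ℝ)^((S \ T).card) := by
      rw [Finset.sum_filter]
      apply Finset.sum_congr rfl
      intro T _
      split_ifs <;> ring
    rw [this]
    have hbij : ∑ T ∈ S.powerset.filter (fun T => F ⊆ T), (-1:ℝ)^((S \ T).card)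
        = ∑ U ∈ (S \ F).powerset, (-1:ℝ)^(((S \ F) \ U).card) := by
      apply Finset.sum_nbij' (fun T => T \ F) (fun U => U ∪ F)
      · intro T hT
        simp only [Finset.mem_filter, Finset.mem_powerset] at hT
        exact Finset.mem_powerset.mpr (Finset.sdiff_subset_sdiff hT.1 le_rfl)
      · intro U hU
        simp only [Finset.mem_powerset] at hU
        simp only [Finset.mem_filter, Finset.mem_powerset]
        exact ⟨Finset.union_subset (hU.trans (Finset.sdiff_subset)) hFS,
          Finset.subset_union_right⟩
      · intro T hT
        simp only [Finset.mem_filter, Finset.mem_powerset] at hT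
        exact Finset.sdiff_union_of_subset hT.2
      · intro U hU
        simp only [Finset.mem_powerset] at hU
        have hdisj : Disjoint U F := by
          refine Finset.disjoint_left.mpr ?_
          intro a haU haF
          have := hU haU
          simp [Finset.mem_sdiff] at this
          exact this.2 haF
        rw [Finset.union_sdiff_distrib, Finset.sdiff_self, Finset.union_empty,
          Finset.sdiff_eq_self_iff_disjoint.mpr hdisj]
      · intro T hT
        simp only [Finset.mem_filter, Finset.mem_powerset] at hT
        congr 2
        ext a
        simp only [Finset.mem_sdiff]
        constructor
        · intro ⟨haS, haT⟩
          exact ⟨⟨haS, fun haF => haT (hT.2 haF)⟩, fun h => haT h.1⟩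
        · intro ⟨⟨haS, _⟩, h⟩
          refine ⟨haS, fun haT => h ⟨haT, ?_⟩⟩
          intro haF; exact ‹a ∉ F› haF
    rw [hbij, sum_sdiff_pow_neg_one]
    have : S \ F = ∅ ↔ F = S := by
      rw [Finset.sdiff_eq_empty_iff_subset]
      exact ⟨fun h => le_antisymm hFS h, fun h => h ▸ le_rfl⟩
    split_ifs with h1 h2 h2 <;> first | rfl | (exact absurd (this.mp h1) h2) |
      (exact absurd (this.mpr h2) h1)
  · have hz : ∀ T ∈ S.powerset, (-1:ℝ)^((S \ T).card) * (if F ⊆ T then 1 else 0) = 0 := by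
      intro T hT
      have : ¬ F ⊆ T := fun h => hFS (h.trans (Finset.mem_powerset.mp hT))
      simp [this]
    rw [Finset.sum_congr rfl hz, Finset.sum_const_zero]
    have : F ≠ S := fun h => hFS (h ▸ le_rfl)
    simp [this]

lemma core2 (F T : Finset Ω) (hT : T ⊆ F) :
    ∑ S ∈ F.powerset, (if T ⊆ S then (-1:ℝ)^((S \ T).card) else 0)
      = if T = F then 1 else 0 := by
  rw [← Finset.sum_filter]
  have hbij : ∑ S ∈ F.powerset.filter (fun S => T ⊆ S), (-1:ℝ)^((S \ T).card)
      = ∑ U ∈ (F \ T).powerset, (-1:ℝ)^(U.card) := by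
    apply Finset.sum_nbij' (fun S => S \ T) (fun U => U ∪ T)
    · intro S hS
      simp only [Finset.mem_filter, Finset.mem_powerset] at hS
      exact Finset.mem_powerset.mpr (Finset.sdiff_subset_sdiff hS.1 le_rfl)
    · intro U hU
      simp only [Finset.mem_powerset] at hU
      simp only [Finset.mem_filter, Finset.mem_powerset]
      exact ⟨Finset.union_subset (hU.trans (Finset.sdiff_subset)) hT,
        Finset.subset_union_right⟩
    · intro S hS
      simp only [Finset.mem_filter, Finset.mem_powerset] at hS
      exact Finset.sdiff_union_of_subset hS.2
    · intro U hU
      simp only [Finset.mem_powerset] at hU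
      have hdisj : Disjoint U T := by
        refine Finset.disjoint_left.mpr ?_
        intro a haU haT
        have := hU haU
        simp [Finset.mem_sdiff] at this
        exact this.2 haT
      rw [Finset.union_sdiff_distrib, Finset.sdiff_self, Finset.union_empty,
        Finset.sdiff_eq_self_iff_disjoint.mpr hdisj]
    · intro S hS; rfl
  rw [hbij, sum_pow_neg_one]
  have : F \ T = ∅ ↔ T = F := by
    rw [Finset.sdiff_eq_empty_iff_subset]
    exact ⟨fun h => le_antisymm hT h, fun h => h ▸ le_rfl⟩
  split_ifs with h1 h2 h2 <;> first | rfl | (exact absurd (this.mp h1) h2) |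
    (exact absurd (this.mpr h2) h1)

lemma mobius (Bel : Finset Ω → ℝ) (F : Finset Ω) :
    ∑ S ∈ F.powerset, (∑ T ∈ S.powerset, (-1:ℝ)^((S \ T).card) * Bel T) = Bel F := by
  have step1 : ∀ S ∈ F.powerset,
      (∑ T ∈ S.powerset, (-1:ℝ)^((S \ T).card) * Bel T)
        = ∑ T ∈ F.powerset, (if T ⊆ S then (-1:ℝ)^((S \ T).card) * Bel T else 0) := by
    intro S hS
    rw [← Finset.sum_filter]
    apply Finset.sum_congr
    · ext U
      simp only [Finset.mem_powerset, Finset.mem_filter]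
      exact ⟨fun h => ⟨h.trans (Finset.mem_powerset.mp hS), h⟩, fun h => h.2⟩
    · intros; rfl
  rw [Finset.sum_congr rfl step1, Finset.sum_comm]
  have step3 : ∀ T ∈ F.powerset,
      (∑ S ∈ F.powerset, (if T ⊆ S then (-1:ℝ)^((S \ T).card) * Bel T else 0))
        = if T = F then Bel T else 0 := by
    intro T hT
    have : ∀ S, (if T ⊆ S then (-1:ℝ)^((S \ T).card) * Bel T else 0)
        = (if T ⊆ S then (-1:ℝ)^((S \ T).card) else 0) * Bel T := by
      intro S; split_ifs <;> ring
    simp only [this]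
    rw [← Finset.sum_mul, core2 F T (Finset.mem_powerset.mp hT)]
    split_ifs <;> ring
  rw [Finset.sum_congr rfl step3]
  rw [Finset.sum_ite_eq' F.powerset F (fun T => Bel T)]
  simp

lemma split_sign (S : Finset Ω) (v : Finset Ω → ℝ) :
    ∑ T ∈ S.powerset, (-1:ℝ)^((S \ T).card) * v T
      = (∑ T ∈ S.powerset.filter (fun T => ¬ Odd (S \ T).card), v T)
        - ∑ T ∈ S.powerset.filter (fun T => Odd (S \ T).card), v T := by
  rw [← Finset.sum_filter_add_sum_filter_not S.powerset (fun T => Odd (S \ T).card)]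
  have h1 : ∑ T ∈ S.powerset.filter (fun T => Odd (S \ T).card), (-1:ℝ)^((S \ T).card) * v T
      = -∑ T ∈ S.powerset.filter (fun T => Odd (S \ T).card), v T := by
    rw [← Finset.sum_neg_distrib]
    apply Finset.sum_congr rfl
    intro T hT
    have := (Finset.mem_filter.mp hT).2
    rw [Odd.neg_one_pow this]; ring
  have h2 : ∑ T ∈ S.powerset.filter (fun T => ¬ Odd (S \ T).card), (-1:ℝ)^((S \ T).card) * v T
      = ∑ T ∈ S.powerset.filter (fun T => ¬ Odd (S \ T).card), v T := by
    apply Finset.sum_congr rfl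
    intro T hT
    have := (Finset.mem_filter.mp hT).2
    rw [Nat.not_odd_iff_even] at this
    rw [Even.neg_one_pow this]; ring
  rw [h1, h2]; ring
end Combinatorics

lemma bcons_finsets {R : (Ω → ℝ) → Bool} (hB : BConsistent R) {ι κ : Type*}
    (𝒜 : Finset ι) (ℬ : Finset κ) (f : ι → Ω → ℝ) (g : κ → Ω → ℝ)
    (h : ∀ E : Set Ω, E.Nonempty →
      ∑ a ∈ 𝒜, sInf (f a '' E) ≤ ∑ b ∈ ℬ, sInf (g b '' E)) :
    ∑ a ∈ 𝒜, Buy R (f a) ≤ ∑ b ∈ ℬ, Buy R (g b) := by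
  have e1 : 𝒜 ≃ Fin 𝒜.card := 𝒜.equivFin
  have e2 : ℬ ≃ Fin ℬ.card := ℬ.equivFin
  have key : ∀ (F : (Ω → ℝ) → ℝ),
      (∑ i : Fin 𝒜.card, F (f (e1.symm i))) = ∑ a ∈ 𝒜, F (f a) := by
    intro F
    rw [← Finset.sum_coe_sort 𝒜 (fun a => F (f a))]
    exact Equiv.sum_comp e1.symm (fun a => F (f (a : ι)))
  have key2 : ∀ (F : (Ω → ℝ) → ℝ),
      (∑ j : Fin ℬ.card, F (g (e2.symm j))) = ∑ b ∈ ℬ, F (g b) := by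
    intro F
    rw [← Finset.sum_coe_sort ℬ (fun b => F (g b))]
    exact Equiv.sum_comp e2.symm (fun b => F (g (b : κ)))
  have := hB 𝒜.card ℬ.card (fun i => f (e1.symm i)) (fun j => g (e2.symm j)) ?_
  · rw [key (Buy R), key2 (Buy R)] at this
    exact this
  · intro E hE
    rw [key (fun Z => sInf (Z '' E)), key2 (fun Z => sInf (Z '' E))]
    exact h E hE

lemma tele_sum (g : ℕ → ℝ) (m : ℕ) :
    ∑ j ∈ Finset.range (m+1), (if j = 0 then g 0 else g j - g (j-1)) = g m := by
  induction m with
  | zero => simp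
  | succ m ih =>
    rw [Finset.sum_range_succ, ih]
    simp only [Nat.succ_ne_zero, if_false, Nat.add_sub_cancel]
    ring

lemma exists_decomposition [Fintype Ω] [Nonempty Ω] (X : Ω → ℝ) :
    ∃ (n : ℕ) (c : Fin n → ℝ) (A : Fin n → Set Ω),
      (∀ k : Fin n, (k:ℕ) ≠ 0 → 0 ≤ c k) ∧
      (∀ k : Fin n, (k:ℕ) = 0 → A k = Set.univ) ∧
      (∀ E : Set Ω, E.Nonempty →
        sInf (X '' E) = ∑ k, sInf ((fun ω => c k * ind (A k) ω) '' E)) := by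
  set n := Fintype.card Ω with hn
  have hn0 : 0 < n := Fintype.card_pos
  set eq0 := Fintype.equivFin Ω with heq0
  set e : Fin n ≃ Ω := (Tuple.sort (X ∘ eq0.symm)).trans eq0.symm with he
  have hmono : Monotone (X ∘ e) := by
    have := Tuple.monotone_sort (X ∘ eq0.symm)
    exact this
  set g : ℕ → ℝ := fun i => X (e ⟨min i (n-1), by omega⟩) with hg
  have hgeq : ∀ (i : ℕ) (h : i < n), g i = X (e ⟨i, h⟩) := by
    intro i h
    simp only [hg]
    exact congrArg (fun j => X (e j)) (Fin.ext (show min i (n-1) = i by omega))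
  have hgmono : Monotone g := by
    intro i j hij
    exact hmono (by simp [Fin.mk_le_mk]; omega)
  refine ⟨n, fun k => if (k:ℕ) = 0 then g 0 else g k - g ((k:ℕ)-1),
    fun k => {ω | (k:ℕ) ≤ ((e.symm ω : Fin n) : ℕ)}, ?_, ?_, ?_⟩
  · intro k hk
    dsimp only
    rw [if_neg hk]
    have : (k:ℕ) - 1 ≤ (k:ℕ) := Nat.sub_le _ _
    have := hgmono this
    linarith
  · intro k hk
    ext ω
    simp [hk]
  · intro E hE
    set F : Finset ℕ := (Set.toFinset E).image (fun ω => ((e.symm ω : Fin n) : ℕ)) with hF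
    have hFne : F.Nonempty :=
      Finset.Nonempty.image (Set.toFinset_nonempty.mpr hE) _
    set iE := F.min' hFne with hiE
    have hmem : iE ∈ F := Finset.min'_mem _ _
    obtain ⟨ω₀, hω₀, hω₀eq⟩ := Finset.mem_image.mp hmem
    have hω₀E : ω₀ ∈ E := Set.mem_toFinset.mp hω₀
    have hiElt : iE < n := hω₀eq ▸ (e.symm ω₀).isLt
    have hle : ∀ ω ∈ E, iE ≤ ((e.symm ω : Fin n) : ℕ) := by
      intro ω hω
      exact Finset.min'_le _ _ (Finset.mem_image.mpr ⟨ω, Set.mem_toFinset.mpr hω, rfl⟩)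
    have hω₀X : X ω₀ = g iE := by
      have h1 : e ⟨iE, hiElt⟩ = ω₀ := by
        have h2 : (⟨iE, hiElt⟩ : Fin n) = e.symm ω₀ := Fin.ext (by simp [hω₀eq])
        rw [h2, e.apply_symm_apply]
      rw [hgeq iE hiElt, h1]
    have hLHS : sInf (X '' E) = g iE := by
      apply IsLeast.csInf_eq
      constructor
      · exact ⟨ω₀, hω₀E, hω₀X⟩
      · rintro y ⟨ω, hω, rfl⟩
        have h1 : X ω = g ((e.symm ω : Fin n) : ℕ) := by
          rw [hgeq _ (e.symm ω).isLt, Fin.eta, e.apply_symm_apply]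
        rw [h1]
        exact hgmono (hle ω hω)
    have hterm : ∀ k : Fin n,
        sInf ((fun ω => (if (k:ℕ) = 0 then g 0 else g k - g ((k:ℕ)-1)) *
          ind {ω | (k:ℕ) ≤ ((e.symm ω : Fin n) : ℕ)} ω) '' E)
        = if (k:ℕ) ≤ iE then (if (k:ℕ) = 0 then g 0 else g k - g ((k:ℕ)-1)) else 0 := by
      intro k
      by_cases hk : (k:ℕ) = 0
      · have hA : {ω : Ω | (k:ℕ) ≤ ((e.symm ω : Fin n) : ℕ)} = Set.univ := by
          ext ω; simp [hk]
        have hfun : (fun ω => (if (k:ℕ) = 0 then g 0 else g k - g ((k:ℕ)-1)) *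
            ind {ω | (k:ℕ) ≤ ((e.symm ω : Fin n) : ℕ)} ω) = fun _ : Ω => g 0 := by
          funext ω
          rw [hA]
          simp [ind_apply, hk]
        rw [hfun, min_const hE]
        simp [hk]
      · have hc : 0 ≤ (if (k:ℕ) = 0 then g 0 else g k - g ((k:ℕ)-1)) := by
          rw [if_neg hk]
          have := hgmono (Nat.sub_le (k:ℕ) 1)
          linarith
        rw [min_scaled_ind hE hc]
        have hsub : E ⊆ {ω : Ω | (k:ℕ) ≤ ((e.symm ω : Fin n) : ℕ)} ↔ (k:ℕ) ≤ iE := by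
          constructor
          · intro h
            have := h hω₀E
            simp only [Set.mem_setOf_eq] at this
            omega
          · intro h ω hω
            exact Set.mem_setOf_eq ▸ h.trans (hle ω hω)
        split_ifs with h1 h2 h2 <;>
          first | rfl | (exact absurd (hsub.mp h1) h2) | (exact absurd (hsub.mpr h2) h1)
    rw [Finset.sum_congr rfl (fun k _ => hterm k)]
    have hsum : ∑ k : Fin n, (if (k:ℕ) ≤ iE then (if (k:ℕ) = 0 then g 0 else g k - g ((k:ℕ)-1)) else 0)
        = ∑ j ∈ Finset.range n, (if j ≤ iE then (if j = 0 then g 0 else g j - g (j-1)) else 0) :=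
      Fin.sum_univ_eq_sum_range (fun j => if j ≤ iE then (if j = 0 then g 0 else g j - g (j-1)) else 0) n
    rw [hsum]
    have hfil : (Finset.range n).filter (fun j => j ≤ iE) = Finset.range (iE + 1) := by
      ext j
      simp only [Finset.mem_filter, Finset.mem_range]
      omega
    rw [← Finset.sum_filter, hfil, tele_sum, hLHS]

theorem BConsistent_iff_choquet [Fintype Ω] [Nonempty Ω] (R : (Ω → ℝ) → Bool)
    (hR : IsBettingFunction R) (hC : Coherent R) :
    BConsistent R ↔
      ∃ m : Finset Ω → ℝ, IsBBA m ∧ ∀ X : Ω → ℝ, Buy R X = Choquet m X := by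
  have hind_empty : ind (∅ : Set Ω) = fun _ => (0:ℝ) := by
    funext ω; simp [ind_apply]
  have hind_univ : ind (Set.univ : Set Ω) = fun _ => (1:ℝ) := by
    funext ω; simp [ind_apply]
  constructor
  · intro hB
    set Bel : Finset Ω → ℝ := fun F => Buy R (ind (↑F : Set Ω)) with hBel
    set m : Finset Ω → ℝ := fun S => ∑ T ∈ S.powerset, (-1:ℝ)^((S \ T).card) * Bel T with hm
    have hmob : ∀ F : Finset Ω, ∑ S ∈ F.powerset, m S = Bel F := by
      intro F
      simp only [hm]
      exact mobius Bel F
    have hm0 : m ∅ = 0 := by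
      simp only [hm, Finset.powerset_empty, Finset.sum_singleton, Finset.sdiff_empty,
        Finset.card_empty, pow_zero, one_mul, hBel, Finset.coe_empty]
      rw [hind_empty, buy_const hR hC]
    have hmtot : ∑ S : Finset Ω, m S = 1 := by
      rw [← Finset.powerset_univ, hmob, hBel]
      simp only [Finset.coe_univ]
      rw [hind_univ, buy_const hR hC]
    have hmnn : ∀ S : Finset Ω, 0 ≤ m S := by
      intro S
      have hineq : ∑ T ∈ S.powerset.filter (fun T => Odd (S \ T).card), Buy R (ind (↑T : Set Ω))
          ≤ ∑ T ∈ S.powerset.filter (fun T => ¬ Odd (S \ T).card), Buy R (ind (↑T : Set Ω)) := by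
        apply bcons_finsets hB _ _ _ _
        intro E hE
        have hval : ∀ T : Finset Ω, sInf (ind (↑T : Set Ω) '' E)
            = if E.toFinset ⊆ T then 1 else 0 := by
          intro T
          rw [min_ind_bet hE]
          congr 1
          simp only [eq_iff_iff]
          exact (Set.toFinset_subset (s := E)).symm
        have hcore := core1 S E.toFinset
        have hsplit := split_sign S (fun T => if E.toFinset ⊆ T then (1:ℝ) else 0)
        rw [hsplit] at hcore
        have hpos : (0:ℝ) ≤ if E.toFinset = S then 1 else 0 := by positivity
        simp only [hval]
        linarith
      have hsplit2 : m S = (∑ T ∈ S.powerset.filter (fun T => ¬ Odd (S \ T).card), Bel T)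
          - ∑ T ∈ S.powerset.filter (fun T => Odd (S \ T).card), Bel T := by
        simp only [hm]; exact split_sign S Bel
      rw [hsplit2]
      simp only [hBel]
      linarith
    have hm1 : ∀ S : Finset Ω, m S ≤ 1 := by
      intro S
      rw [← hmtot]
      exact Finset.single_le_sum (fun T _ => hmnn T) (Finset.mem_univ S)
    have hCc : ∀ r : ℝ, Choquet m (fun _ => r) = r := by
      intro r
      have : ∀ S : Finset Ω, m S * sInf ((fun _ : Ω => r) '' (↑S : Set Ω)) = m S * r := by
        intro S
        rcases S.eq_empty_or_nonempty with rfl | hS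
        · rw [hm0]; ring
        · rw [min_const (by exact_mod_cast Finset.coe_nonempty.mpr hS) r]
      rw [Choquet, Finset.sum_congr rfl (fun S _ => this S), ← Finset.sum_mul, hmtot, one_mul]
    have hCind : ∀ (r : ℝ), 0 ≤ r → ∀ A : Set Ω,
        Choquet m (fun ω => r * ind A ω) = r * Buy R (ind A) := by
      intro r hr A
      have hterm : ∀ S : Finset Ω,
          m S * sInf ((fun ω => r * ind A ω) '' (↑S : Set Ω))
            = if (↑S : Set Ω) ⊆ A then m S * r else 0 := by
        intro S
        rcases S.eq_empty_or_nonempty with rfl | hS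
        · rw [hm0]
          simp
        · rw [min_scaled_ind (by exact_mod_cast Finset.coe_nonempty.mpr hS) hr A]
          split_ifs <;> ring
      rw [Choquet, Finset.sum_congr rfl (fun S _ => hterm S)]
      have hfil : Finset.filter (fun S : Finset Ω => (S : Set Ω) ⊆ A) Finset.univ
          = (A.toFinset).powerset := by
        ext T
        simp only [Finset.mem_filter, Finset.mem_univ, true_and, Finset.mem_powerset]
        exact (Set.subset_toFinset).symm
      rw [← Finset.sum_filter, hfil]
      have : ∑ S ∈ (A.toFinset).powerset, m S * r
          = (∑ S ∈ (A.toFinset).powerset, m S) * r := by rw [Finset.sum_mul]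
      rw [this, hmob, hBel]
      simp only [Set.coe_toFinset]
      ring
    refine ⟨m, ⟨fun S => ⟨hmnn S, hm1 S⟩, hm0, hmtot⟩, ?_⟩
    intro X
    obtain ⟨n, c, A, hc, hA0, hmin⟩ := exists_decomposition X
    set Y : Fin n → Ω → ℝ := fun k ω => c k * ind (A k) ω with hY
    have step1 : Buy R X = ∑ k, Buy R (Y k) := by
      apply le_antisymm
      · have := hB 1 n (fun _ => X) Y ?_
        · simpa using this
        · intro E hE
          simp only [Fin.sum_univ_one]
          exact le_of_eq (hmin E hE)
      · have := hB n 1 Y (fun _ => X) ?_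
        · simpa using this
        · intro E hE
          simp only [Fin.sum_univ_one]
          exact ge_of_eq (hmin E hE)
    have step2 : Choquet m X = ∑ k, Choquet m (Y k) := by
      have hterm : ∀ S : Finset Ω,
          m S * sInf (X '' (↑S : Set Ω)) = ∑ k, m S * sInf (Y k '' (↑S : Set Ω)) := by
        intro S
        rcases S.eq_empty_or_nonempty with rfl | hS
        · rw [hm0]
          simp
        · rw [hmin (↑S : Set Ω) (by exact_mod_cast Finset.coe_nonempty.mpr hS), Finset.mul_sum]
      rw [Choquet, Finset.sum_congr rfl (fun S _ => hterm S), Finset.sum_comm]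
      rfl
    have step3 : ∀ k : Fin n, Buy R (Y k) = Choquet m (Y k) := by
      intro k
      by_cases hk : (k:ℕ) = 0
      · have hYk : Y k = fun _ => c k := by
          funext ω
          simp only [hY, hA0 k hk, hind_univ]
          ring
        rw [hYk, buy_const hR hC, hCc]
      · have h1 : Buy R (Y k) = c k * Buy R (ind (A k)) := buy_smul hR hC _ (hc k hk)
        rw [h1, hY, hCind (c k) (hc k hk) (A k)]
    rw [step1, step2]
    exact Finset.sum_congr rfl (fun k _ => step3 k)
  · rintro ⟨m, ⟨hm01, hm0, hmtot⟩, hbuy⟩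
    intro N M X Y h
    have key : ∀ (P : ℕ) (Z : Fin P → Ω → ℝ),
        ∑ i, Buy R (Z i) = ∑ S : Finset Ω, m S * ∑ i, sInf (Z i '' (↑S : Set Ω)) := by
      intro P Z
      have : ∀ i, Buy R (Z i) = ∑ S : Finset Ω, m S * sInf (Z i '' (↑S : Set Ω)) := by
        intro i; rw [hbuy (Z i)]; rfl
      rw [Finset.sum_congr rfl (fun i _ => this i), Finset.sum_comm]
      exact Finset.sum_congr rfl (fun S _ => (Finset.mul_sum _ _ _).symm)
    rw [key N X, key M Y]
    apply Finset.sum_le_sum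
    intro S _
    rcases S.eq_empty_or_nonempty with rfl | hS
    · rw [hm0]; simp
    · exact mul_le_mul_of_nonneg_left
        (h (↑S : Set Ω) (by exact_mod_cast Finset.coe_nonempty.mpr hS)) (hm01 S).1
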